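/- Let X, Y ∈ ℂ^{n×m} be nonzero such that X*Y + Y*X is invertible. If there exists Δ ∈ ℂ^{n×n} with ΔX = Y and Δ + Δ* positive semidefinite, then X*Y + Y*X is positive definite. -/

import Mathlib

open Matrix
open scoped ComplexOrder

theorem posDef_of_dissipative_mapping_of_isUnit
    {n m : ℕ} (X Y : Matrix (Fin n) (Fin m) ℂ) (hX : X ≠ 0) (hY : Y ≠ 0)
    (hUnit : IsUnit (Xᴴ * Y + Yᴴ * X))
    (h : ∃ Δ : Matrix (Fin n) (Fin n) ℂ, Δ * X = Y ∧ (Δ + Δᴴ).PosSemidef) :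
    (Xᴴ * Y + Yᴴ * X).PosDef := by
  obtain ⟨Δ, hΔX, hPSD⟩ := h
  have hEq : Xᴴ * Y + Yᴴ * X = Xᴴ * (Δ + Δᴴ) * X := by
    subst hΔX
    simp [Matrix.mul_add, Matrix.add_mul, conjTranspose_mul, Matrix.mul_assoc]
  have hPS : (Xᴴ * Y + Yᴴ * X).PosSemidef := by
    rw [hEq]
    exact hPSD.conjTranspose_mul_mul_same X
  refine ⟨hPS.1, fun x hx => lt_of_le_of_ne (hPS.2 x) fun heq => hx ?_⟩
  have h0 : (Xᴴ * Y + Yᴴ * X) *ᵥ x = 0 :=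
    (hPS.dotProduct_mulVec_zero_iff x).mp (by
      simpa [dotProduct, mulVec, Finsupp.sum_fintype, Finset.mul_sum, mul_assoc] using heq.symm)
  have := congrArg (fun v => (Xᴴ * Y + Yᴴ * X)⁻¹ *ᵥ v) h0
  have hm : (Xᴴ * Y + Yᴴ * X)⁻¹ * (Xᴴ * Y + Yᴴ * X) = 1 :=
    Matrix.nonsing_inv_mul _ ((Matrix.isUnit_iff_isUnit_det _).mp hUnit)
  simpa [Matrix.mulVec_mulVec, hm] using this
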